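/- Let W be a finite set, f : 2^W → ℝ≥0 be normalized, monotone, and submodular, and let k ≥ 1 and t ≤ k be natural numbers. Let A_t be the set produced by t iterations of the greedy algorithm that, starting from ∅, at each step adds an element maximizing the marginal gain of f. Then f(A_t) ≥ (1 - exp(-t/k)) · max { f(B) : B ⊆ W, |B| ≤ k }. -/

import Mathlib

open Finset

lemma stmt_10_marg {W : Type*} [DecidableEq W] (f : Finset W → ℝ)
    (hsub : ∀ A B : Finset W, f A + f B ≥ f (A ∪ B) + f (A ∩ B))
    (S T : Finset W) (hST : S ⊆ T) (a : W) (ha : a ∉ T) :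
    f (insert a T) - f T ≤ f (insert a S) - f S := by
  have h := hsub (insert a S) T
  have h1 : insert a S ∪ T = insert a T := by
    ext x; simp only [mem_union, mem_insert]
    constructor
    · rintro (⟨h | h⟩ | h) <;> [exact Or.inl h; exact Or.inr (hST h); exact Or.inr h]
    · rintro (h | h) <;> [exact Or.inl (Or.inl h); exact Or.inr h]
  have h2 : insert a S ∩ T = S := by
    ext x; simp only [mem_inter, mem_insert]
    constructor
    · rintro ⟨h | h, hT⟩
      · exact absurd (h ▸ hT) ha
      · exact h
    · exact fun h => ⟨Or.inr h, hST h⟩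
  rw [h1, h2] at h
  linarith

lemma stmt_10_sumsub {W : Type*} [DecidableEq W] (f : Finset W → ℝ)
    (hmono : ∀ A B : Finset W, A ⊆ B → f A ≤ f B)
    (hsub : ∀ A B : Finset W, f A + f B ≥ f (A ∪ B) + f (A ∩ B))
    (B : Finset W) : ∀ S : Finset W,
    f (S ∪ B) ≤ f S + ∑ b ∈ B, (f (insert b S) - f S) := by
  induction B using Finset.induction_on with
  | empty => intro S; simp
  | insert _ _ hb ih =>
    rename_i b B'
    intro S
    rw [Finset.sum_insert hb]
    rw [Finset.union_insert]
    by_cases hbS : b ∈ S ∪ B'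
    · have : insert b (S ∪ B') = S ∪ B' := Finset.insert_eq_self.2 hbS
      rw [this]
      have hge : f S ≤ f (insert b S) := hmono _ _ (Finset.subset_insert _ _)
      have := ih S
      linarith
    · have := stmt_10_marg f hsub S (S ∪ B') Finset.subset_union_left b hbS
      have := ih S
      linarith

/-- `t ≤ k` steps of the greedy algorithm for a normalized monotone
submodular function achieve a `1 - exp(-t/k)` fraction of the optimum over sets of
cardinality at most `k`. -/
theorem stmt_10 {W : Type*} [Fintype W] [DecidableEq W] (f : Finset W → ℝ)
    (hnn : ∀ A : Finset W, 0 ≤ f A) (hnorm : f ∅ = 0)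
    (hmono : ∀ A B : Finset W, A ⊆ B → f A ≤ f B)
    (hsub : ∀ A B : Finset W, f A + f B ≥ f (A ∪ B) + f (A ∩ B))
    (k t : ℕ) (hk : 1 ≤ k) (ht : t ≤ k)
    (A : ℕ → Finset W) (hA0 : A 0 = ∅)
    (hstep : ∀ i < t, ∃ a ∉ A i, A (i + 1) = insert a (A i) ∧
      ∀ a' ∉ A i, f (insert a' (A i)) ≤ f (insert a (A i))) :
    f (A t) ≥ (1 - Real.exp (-(t : ℝ) / k)) *
      ((Finset.univ.powerset.filter (fun B : Finset W => B.card ≤ k)).sup' ⟨∅, by simp⟩ f) := by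
  set s := Finset.univ.powerset.filter (fun B : Finset W => B.card ≤ k) with hs
  set OPT := s.sup' ⟨∅, by simp [hs]⟩ f with hOPT
  have hk0 : (0 : ℝ) < k := by positivity
  obtain ⟨B, hBmem, hBeq⟩ := Finset.exists_mem_eq_sup' (⟨∅, by simp [hs]⟩ : s.Nonempty) f
  have hBcard : B.card ≤ k := by
    simp only [hs, Finset.mem_filter] at hBmem; exact hBmem.2
  have hOPTB : OPT = f B := hBeq
  have hOPTnn : 0 ≤ OPT := hOPTB ▸ hnn B
  -- key step
  have key : ∀ i, i < t → OPT - f (A (i + 1)) ≤ (1 - 1 / k) * (OPT - f (A i)) := by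
    intro i hi
    obtain ⟨a, ha, hA1, hmax⟩ := hstep i hi
    set g := f (A (i + 1)) - f (A i) with hg
    have hg0 : 0 ≤ g := by
      rw [hg, hA1]; linarith [hmono (A i) (insert a (A i)) (Finset.subset_insert _ _)]
    have h1 : f B ≤ f (A i ∪ B) := hmono _ _ Finset.subset_union_right
    have h2 := stmt_10_sumsub f hmono hsub B (A i)
    have h3 : ∑ b ∈ B, (f (insert b (A i)) - f (A i)) ≤ B.card • g := by
      apply Finset.sum_le_card_nsmul
      intro b _
      by_cases hbA : b ∈ A i
      · rw [Finset.insert_eq_self.2 hbA]; simpa using hg0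
      · have := hmax b hbA
        rw [hg, hA1]; linarith
    have h4 : (B.card : ℝ) • g ≤ (k : ℝ) * g := by
      rw [smul_eq_mul]
      exact mul_le_mul_of_nonneg_right (by exact_mod_cast hBcard) hg0
    have h5 : f B - f (A i) ≤ k * g := by
      have := h3
      rw [nsmul_eq_mul] at this
      calc f B - f (A i) ≤ ∑ b ∈ B, (f (insert b (A i)) - f (A i)) := by linarith
        _ ≤ (B.card : ℝ) * g := this
        _ ≤ k * g := by
            exact mul_le_mul_of_nonneg_right (by exact_mod_cast hBcard) hg0
    have h6 : (OPT - f (A i)) / k ≤ g := by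
      rw [div_le_iff₀ hk0]
      linarith [h5, hOPTB]
    have : (1 - 1 / (k : ℝ)) * (OPT - f (A i)) = (OPT - f (A i)) - (OPT - f (A i)) / k := by
      field_simp
    rw [this]
    linarith
  have hk1 : 0 ≤ 1 - 1 / (k : ℝ) := by
    have : 1 / (k : ℝ) ≤ 1 := by
      rw [div_le_one hk0]; exact_mod_cast hk
    linarith
  -- induction
  have main : ∀ i, i ≤ t → OPT - f (A i) ≤ (1 - 1 / k) ^ i * OPT := by
    intro i
    induction i with
    | zero => intro _; simp [hA0, hnorm]
    | succ n ih =>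
      intro hn
      have hnt : n < t := hn
      calc OPT - f (A (n + 1)) ≤ (1 - 1 / k) * (OPT - f (A n)) := key n hnt
        _ ≤ (1 - 1 / k) * ((1 - 1 / k) ^ n * OPT) :=
            mul_le_mul_of_nonneg_left (ih (le_of_lt hnt)) hk1
        _ = (1 - 1 / k) ^ (n + 1) * OPT := by ring
  have hexp : (1 - 1 / (k : ℝ)) ^ t ≤ Real.exp (-(t : ℝ) / k) := by
    have h1 : 1 - 1 / (k : ℝ) ≤ Real.exp (-(1 / k)) := by
      linarith [Real.add_one_le_exp (-(1 / (k : ℝ)))]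
    calc (1 - 1 / (k : ℝ)) ^ t ≤ Real.exp (-(1 / k)) ^ t := pow_le_pow_left₀ hk1 h1 t
      _ = Real.exp ((t : ℝ) * (-(1 / k))) := (Real.exp_nat_mul _ t).symm
      _ = Real.exp (-(t : ℝ) / k) := by ring_nf
  have hfin : OPT - f (A t) ≤ Real.exp (-(t : ℝ) / k) * OPT := by
    calc OPT - f (A t) ≤ (1 - 1 / k) ^ t * OPT := main t le_rfl
      _ ≤ Real.exp (-(t : ℝ) / k) * OPT := mul_le_mul_of_nonneg_right hexp hOPTnn
  linarith
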